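/- In the LTS of the specification ET ∪ E∞Q, for all d ∈ D□ and δL, δR ∈ D□*: (i) if δL = ζL dL for some dL ∈ D□ and ζL ∈ D□*, then [H^L_d ∥ Q_{δR ⊥ δL}]_{{i,o}} has a deterministic internal computation to [H_{dL} ∥ Q_{d δR ⊥ ζL}]_{{i,o}}, and if δL = ε then [H^L_d ∥ Q_{δR ⊥ δL}]_{{i,o}} has a deterministic internal computation to [H_□ ∥ Q_{d δR ⊥}]_{{i,o}}; (ii) if δR = dR ζR for some dR ∈ D□ and ζR ∈ D□*, then [H^R_d ∥ Q_{δR ⊥ δL}]_{{i,o}} has a deterministic internal computation to [H_{dR} ∥ Q_{ζR ⊥ δL d}]_{{i,o}}, and if δR = ε then [H^R_d ∥ Q_{δR ⊥ δL}]_{{i,o}} has a deterministic internal computation to [H_□ ∥ Q_{⊥ δL d}]_{{i,o}}. -/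

import Mathlib

namespace RTMPaper

/-! ## Labelled transition systems

An `A`-labelled transition system; transition labels are drawn from `Option A`,
where `none` plays the role of the unobservable action τ. -/

structure LTS (A : Type) where
  State : Type
  tr : State → Option A → State → Prop
  init : State
  final : Set State

namespace LTS

variable {A : Type}

/-- A τ-step. -/
def tauStep (T : LTS A) (s t : T.State) : Prop := T.tr s none t

/-- `⇒` : the reflexive–transitive closure of τ-steps. -/
def tauReach (T : LTS A) : T.State → T.State → Prop :=
  Relation.ReflTransGen T.tauStep

/-- `s —(a)→ t` : either `s —a→ t`, or `a = τ` and `s = t`. -/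
def optStep (T : LTS A) (s : T.State) (a : Option A) (t : T.State) : Prop :=
  T.tr s a t ∨ (a = none ∧ s = t)

/-- The set of outgoing transitions of a state. -/
def out (T : LTS A) (s : T.State) : Set (Option A × T.State) :=
  {p | T.tr s p.1 p.2}

def FinitelyBranching (T : LTS A) : Prop := ∀ s, (T.out s).Finite

/-- The branching degree of `T` is bounded by `B`. -/
def BranchingDegreeBoundedBy (T : LTS A) (B : ℕ) : Prop :=
  ∀ s, (T.out s).Finite ∧ (T.out s).ncard ≤ B

def BoundedlyBranching (T : LTS A) : Prop := ∃ B, T.BranchingDegreeBoundedBy B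

/-- A deterministic transition system. -/
def Deterministic (T : LTS A) : Prop :=
  (∀ s a t₁ t₂, T.tr s a t₁ → T.tr s a t₂ → t₁ = t₂) ∧
  (∀ s t, T.tr s none t → ∀ a u, T.tr s a u → a = none)

/-- Relabelling of an LTS along a map of action alphabets (τ is mapped to τ). -/
def relabel {A' : Type} (f : A → A') (T : LTS A) : LTS A' where
  State := T.State
  tr s a t := ∃ a₀ : Option A, T.tr s a₀ t ∧ a = Option.map f a₀
  init := T.init
  final := T.final

end LTS

/-! ## (Divergence-preserving) branching bisimilarity -/

structure IsBranchingBisimulation {A : Type} (T₁ T₂ : LTS A)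
    (R : T₁.State → T₂.State → Prop) : Prop where
  fwd : ∀ s₁ s₂ a s₁', R s₁ s₂ → T₁.tr s₁ a s₁' →
    ∃ s₂'' s₂', T₂.tauReach s₂ s₂'' ∧ T₂.optStep s₂'' a s₂' ∧ R s₁ s₂'' ∧ R s₁' s₂'
  bwd : ∀ s₁ s₂ a s₂', R s₁ s₂ → T₂.tr s₂ a s₂' →
    ∃ s₁'' s₁', T₁.tauReach s₁ s₁'' ∧ T₁.optStep s₁'' a s₁' ∧ R s₁'' s₂ ∧ R s₁' s₂'
  finFwd : ∀ s₁ s₂, R s₁ s₂ → s₁ ∈ T₁.final →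
    ∃ s₂', T₂.tauReach s₂ s₂' ∧ R s₁ s₂' ∧ s₂' ∈ T₂.final
  finBwd : ∀ s₁ s₂, R s₁ s₂ → s₂ ∈ T₂.final →
    ∃ s₁', T₁.tauReach s₁ s₁' ∧ R s₁' s₂ ∧ s₁' ∈ T₁.final

/-- The divergence-preservation conditions on a branching bisimulation. -/
def DivergencePreserving {A : Type} (T₁ T₂ : LTS A)
    (R : T₁.State → T₂.State → Prop) : Prop :=
  (∀ (s₂ : T₂.State) (f : ℕ → T₁.State),
      (∀ i, T₁.tauStep (f i) (f (i + 1))) → (∀ i, R (f i) s₂) →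
      ∃ s₂', Relation.TransGen T₂.tauStep s₂ s₂' ∧ ∃ i, R (f i) s₂') ∧
  (∀ (s₁ : T₁.State) (f : ℕ → T₂.State),
      (∀ i, T₂.tauStep (f i) (f (i + 1))) → (∀ i, R s₁ (f i)) →
      ∃ s₁', Relation.TransGen T₁.tauStep s₁ s₁' ∧ ∃ i, R s₁' (f i))

/-- `T₁ ≈b T₂` : branching bisimilarity. -/
def BranchingBisimilar {A : Type} (T₁ T₂ : LTS A) : Prop :=
  ∃ R, IsBranchingBisimulation T₁ T₂ R ∧ R T₁.init T₂.init

/-- `T₁ ≈Δb T₂` : divergence-preserving branching bisimilarity. -/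
def DPBranchingBisimilar {A : Type} (T₁ T₂ : LTS A) : Prop :=
  ∃ R, IsBranchingBisimulation T₁ T₂ R ∧ DivergencePreserving T₁ T₂ R ∧
    R T₁.init T₂.init

/-! ## Effective and computable transition systems -/

/-- A set of natural numbers is recursively enumerable. -/
def REset (X : Set ℕ) : Prop :=
  ∃ f : ℕ →. Unit, Partrec f ∧ ∀ n, (f n).Dom ↔ n ∈ X

/-- A (finitely branching) LTS is computable if, with respect to some injective
codings of its labels and states into ℕ, the functions `out` and `fin` are
recursive. -/
def LTS.IsComputable {A : Type} (T : LTS A) : Prop :=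
  ∃ hfb : ∀ s, (T.out s).Finite,
    ∃ (cL : Option A → ℕ) (cS : T.State → ℕ),
      Function.Injective cL ∧ Function.Injective cS ∧
      (∃ fo : ℕ → ℕ, Computable fo ∧ ∀ s,
        fo (cS s) =
          Encodable.encode
            (((hfb s).toFinset).image fun p => Nat.pair (cL p.1) (cS p.2))) ∧
      (∃ ff : ℕ → ℕ, Computable ff ∧ ∀ s,
        (s ∈ T.final → ff (cS s) = 1) ∧ (s ∉ T.final → ff (cS s) = 0))

/-- A (finitely branching) LTS is effective if, with respect to some injective
codings of its labels and states into ℕ, its transition relation and its set of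
final states are recursively enumerable. -/
def LTS.IsEffective {A : Type} (T : LTS A) : Prop :=
  T.FinitelyBranching ∧
  ∃ (cL : Option A → ℕ) (cS : T.State → ℕ),
    Function.Injective cL ∧ Function.Injective cS ∧
    REset {n | ∃ s a t, T.tr s a t ∧ n = Nat.pair (cS s) (Nat.pair (cL a) (cS t))} ∧
    REset {n | ∃ s ∈ T.final, n = cS s}

/-! ## Reactive Turing machines -/

inductive Move : Type
  | L | R
deriving DecidableEq

instance : Fintype Move where
  elems := {Move.L, Move.R}
  complete := by intro x; cases x <;> simp

/-- A tape instance: the content left of the head (nearest symbol first), the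
symbol under the head, and the content right of the head (nearest symbol
first).  Tape symbols are `Option D`, with `none` the blank symbol □. -/
structure Tape (D : Type) where
  left : List (Option D)
  head : Option D
  right : List (Option D)

def Tape.empty (D : Type) : Tape D := ⟨[], none, []⟩

/-- Write `e` at the head position and move the head in direction `m`. -/
def Tape.writeMove {D : Type} (t : Tape D) (e : Option D) : Move → Tape D
  | .L =>
    match t.left with
    | [] => ⟨[], none, e :: t.right⟩
    | x :: l => ⟨l, x, e :: t.right⟩
  | .R =>
    match t.right with
    | [] => ⟨e :: t.left, none, []⟩
    | x :: r => ⟨e :: t.left, x, r⟩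

/-- A reactive Turing machine with action symbols `A` (labels `Option A`,
`none` being τ) and data symbols `D` (tape symbols `Option D`, `none` being
the blank symbol). -/
structure RTM (A D : Type) where
  Q : Type
  [instQ : Fintype Q]
  trans : Q → Option D → Option A → Option D → Move → Q → Prop
  init : Q
  final : Set Q

attribute [instance] RTM.instQ

/-- The transition system `T(M)` associated with an RTM `M`. -/
def RTM.lts {A D : Type} (M : RTM A D) : LTS A where
  State := M.Q × Tape D
  tr c a c' := ∃ e m, M.trans c.1 c.2.head a e m c'.1 ∧ c'.2 = c.2.writeMove e m
  init := (M.init, Tape.empty D)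
  final := {c | c.1 ∈ M.final}

def RTM.Deterministic {A D : Type} (M : RTM A D) : Prop :=
  (∀ s d a e₁ m₁ t₁ e₂ m₂ t₂, M.trans s d a e₁ m₁ t₁ → M.trans s d a e₂ m₂ t₂ →
      e₁ = e₂ ∧ m₁ = m₂ ∧ t₁ = t₂) ∧
  (∀ s d e₁ m₁ t₁, M.trans s d none e₁ m₁ t₁ →
      ∀ a e₂ m₂ t₂, M.trans s d a e₂ m₂ t₂ → a = none)

/-! ## Actions over channels, and parallel composition -/

/-- Actions over a set `C` of channels with communicated values in `V`,
together with further (base) actions from `B`:  `recv c v` is `c?v`,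
`send c v` is `c!v`. -/
inductive CAct (C V B : Type) : Type
  | recv : C → V → CAct C V B
  | send : C → V → CAct C V B
  | base : B → CAct C V B
deriving DecidableEq

/-- The (possibly silent) action `a` is a communication action on one of the
channels in `C'`. -/
def IsComm {C V B : Type} (C' : Set C) : Option (CAct C V B) → Prop
  | some (.recv c _) => c ∈ C'
  | some (.send c _) => c ∈ C'
  | _ => False

/-- Parallel composition `[T₁ ∥ T₂]_{C'}` of transition systems, enforcing
communication on the channels in `C'`. -/
def parLTS {C V B : Type} (C' : Set C) (T₁ T₂ : LTS (CAct C V B)) :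
    LTS (CAct C V B) where
  State := T₁.State × T₂.State
  init := (T₁.init, T₂.init)
  final := {p | p.1 ∈ T₁.final ∧ p.2 ∈ T₂.final}
  tr p a p' :=
    ¬ IsComm C' a ∧
    ((T₁.tr p.1 a p'.1 ∧ p.2 = p'.2) ∨
     (T₂.tr p.2 a p'.2 ∧ p.1 = p'.1) ∨
     (a = none ∧ ∃ c ∈ C', ∃ d : V,
        (T₁.tr p.1 (some (.send c d)) p'.1 ∧ T₂.tr p.2 (some (.recv c d)) p'.2) ∨
        (T₁.tr p.1 (some (.recv c d)) p'.1 ∧ T₂.tr p.2 (some (.send c d)) p'.2)))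

/-- The behaviour of `sender(M)`: output the symbols of `w` one by one along
channel `cu`, then halt in a final state. -/
def outputLTS {C V B : Type} (cu : C) (w : List V) : LTS (CAct C V B) where
  State := List V
  tr s a t := ∃ d, s = d :: t ∧ a = some (.send cu d)
  init := w
  final := {([] : List V)}

/-- A concrete (syntactic, Gödel-numberable) presentation of a reactive Turing
machine: states are `Fin (n+1)`, and the transition relation is a finite set of
tuples. -/
structure RTMc (A D : Type) where
  n : ℕ
  trans : Finset (Fin (n + 1) × Option D × Option A × Option D × Move × Fin (n + 1))
  init : Fin (n + 1)
  final : Finset (Fin (n + 1))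

def RTMc.toRTM {A D : Type} (M : RTMc A D) : RTM A D where
  Q := Fin (M.n + 1)
  trans s d a e m t := (s, d, a, e, m, t) ∈ M.trans
  init := M.init
  final := (↑M.final : Set (Fin (M.n + 1)))

end RTMPaper

namespace RTMPaper

/-! ## A process calculus (TCP_τ without sequential composition) -/

/-- Process expressions: deadlock `0`, skip `1`, action prefix, alternative
composition, parallel composition (enforcing communication on a set of
channels), and names. -/
inductive PExp (C V B N : Type) : Type
  | dl : PExp C V B N
  | emp : PExp C V B N
  | pref : Option (CAct C V B) → PExp C V B N → PExp C V B N
  | alt : PExp C V B N → PExp C V B N → PExp C V B N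
  | par : Set C → PExp C V B N → PExp C V B N → PExp C V B N
  | name : N → PExp C V B N

namespace PExp

def names {C V B N : Type} : PExp C V B N → Set N
  | .dl => ∅
  | .emp => ∅
  | .pref _ p => p.names
  | .alt p q => p.names ∪ q.names
  | .par _ p q => p.names ∪ q.names
  | .name n => {n}

def mapNames {C V B N N' : Type} (f : N → N') : PExp C V B N → PExp C V B N'
  | .dl => .dl
  | .emp => .emp
  | .pref a p => .pref a (p.mapNames f)
  | .alt p q => .alt (p.mapNames f) (q.mapNames f)
  | .par C' p q => .par C' (p.mapNames f) (q.mapNames f)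
  | .name n => .name (f n)

end PExp

/-- A recursive specification over the names `N` is a partial map from names to
process expressions (the defining equations). -/
def SpecWF {C V B N : Type} (E : N → Option (PExp C V B N)) : Prop :=
  ∀ n p, E n = some p → ∀ m ∈ PExp.names p, (E m).isSome

/-- All names occurring in `p` have a defining equation in `E`. -/
def DefinedIn {C V B N : Type} (E : N → Option (PExp C V B N))
    (p : PExp C V B N) : Prop :=
  ∀ m ∈ PExp.names p, (E m).isSome

/-- The termination predicate `↓` of the structural operational semantics. -/
inductive Term {C V B N : Type} (E : N → Option (PExp C V B N)) :
    PExp C V B N → Prop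
  | emp : Term E .emp
  | altL {p q} : Term E p → Term E (.alt p q)
  | altR {p q} : Term E q → Term E (.alt p q)
  | par {C' p q} : Term E p → Term E q → Term E (.par C' p q)
  | name {n p} : E n = some p → Term E p → Term E (.name n)

/-- The transition relation of the structural operational semantics. -/
inductive Step {C V B N : Type} (E : N → Option (PExp C V B N)) :
    PExp C V B N → Option (CAct C V B) → PExp C V B N → Prop
  | pref {a p} : Step E (.pref a p) a p
  | altL {p q a p'} : Step E p a p' → Step E (.alt p q) a p'
  | altR {p q a q'} : Step E q a q' → Step E (.alt p q) a q'
  | parL {C' p q a p'} : Step E p a p' → ¬ IsComm C' a →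
      Step E (.par C' p q) a (.par C' p' q)
  | parR {C' p q a q'} : Step E q a q' → ¬ IsComm C' a →
      Step E (.par C' p q) a (.par C' p q')
  | syncSR {C' : Set C} {p q p' q' c d} : c ∈ C' →
      Step E p (some (.send c d)) p' → Step E q (some (.recv c d)) q' →
      Step E (.par C' p q) none (.par C' p' q')
  | syncRS {C' : Set C} {p q p' q' c d} : c ∈ C' →
      Step E p (some (.recv c d)) p' → Step E q (some (.send c d)) q' →
      Step E (.par C' p q) none (.par C' p' q')
  | name {n p a p'} : E n = some p → Step E p a p' → Step E (.name n) a p'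

/-- The process expressions reachable from `p` under the semantics of `E`. -/
def Reach {C V B N : Type} (E : N → Option (PExp C V B N))
    (p : PExp C V B N) : Set (PExp C V B N) :=
  {q | Relation.ReflTransGen (fun x y => ∃ a, Step E x a y) p q}

/-- The transition system `T_E(p)` associated with the process expression `p`
and the recursive specification `E`. -/
def pLTS {C V B N : Type} (E : N → Option (PExp C V B N))
    (p : PExp C V B N) : LTS (CAct C V B) where
  State := {q // q ∈ Reach E p}
  tr s a t := Step E s.1 a t.1
  init := ⟨p, Relation.ReflTransGen.refl⟩
  final := {s | Term E s.1}

/-- A deterministic internal computation from `s` to `s'` with respect to a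
transition relation `tr`. -/
def DetInternalComp {S A : Type} (tr : S → Option A → S → Prop)
    (s s' : S) : Prop :=
  ∃ (n : ℕ) (f : ℕ → S), f 0 = s ∧ f n = s' ∧
    (∀ i < n, tr (f i) none (f (i + 1))) ∧
    (∀ i < n, ∀ a u, tr (f i) a u → a = none ∧ u = f (i + 1))

/-! ### Finite sums of process expressions -/

def bigAlt {C V B N : Type} (l : List (PExp C V B N)) : PExp C V B N :=
  l.foldr PExp.alt PExp.dl

/-- `Σ_{x ∈ l} f x`. -/
def sumList {C V B N ι : Type} (l : List ι) (f : ι → PExp C V B N) :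
    PExp C V B N :=
  bigAlt (l.map f)

/-- The list of all elements of a finite type. -/
noncomputable def allOf (ι : Type) [Fintype ι] : List ι := Finset.univ.toList

/-- The disjoint union of two recursive specifications. -/
def combineSpec {C V B N₁ N₂ : Type}
    (E₁ : N₁ → Option (PExp C V B N₁)) (E₂ : N₂ → Option (PExp C V B N₂)) :
    N₁ ⊕ N₂ → Option (PExp C V B (N₁ ⊕ N₂))
  | .inl n => (E₁ n).map (PExp.mapNames Sum.inl)
  | .inr n => (E₂ n).map (PExp.mapNames Sum.inr)

/-! ### Queue specifications -/

/-- The infinite specification `E∞Q` of a FIFO queue over the alphabet `al`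
with input channel `ci` and output channel `co`; the name of a state of the
queue is its contents (a string, insertion at the left, removal at the
right). -/
def infQueueSpec (C B V : Type) (al : List V) (ci co : C) :
    List V → Option (PExp C V B (List V)) := fun l =>
  some <|
    match l.getLast? with
    | none =>
        .alt (sumList al fun d => .pref (some (.recv ci d)) (.name [d])) .emp
    | some d =>
        .alt (.alt (.pref (some (.send co d)) (.name l.dropLast))
          (sumList al fun e => .pref (some (.recv ci e)) (.name (e :: l)))) .emp

/-- The finite Bergstra–Klop queue specification `EQ` (with added `1`-summands):
for channels `(j,k,p)`,
`Q^{jk}_p ≝ Σ_d j?d.[ Q^{jp}_k ∥ (1 + k!d.Q^{pk}_j) ]_{{p}} + 1`. -/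
def bkQueueSpec (C B V : Type) (al : List V) :
    C × C × C → Option (PExp C V B (C × C × C)) := fun jkp =>
  some <| .alt
    (sumList al fun d => .pref (some (.recv jkp.1 d))
      (.par {jkp.2.2} (.name (jkp.1, jkp.2.2, jkp.2.1))
        (.alt .emp (.pref (some (.send jkp.2.1 d)) (.name (jkp.2.2, jkp.2.1, jkp.1))))))
    .emp

/-! ### Tape specifications -/

/-- Symbols communicated in the tape/queue specifications: tape symbols
(`dat d` for `d ∈ D□`), the fresh symbols `⊥` and `$`, and the move
instructions `L` and `R`. -/
inductive Sym (D : Type) : Type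
  | dat : Option D → Sym D
  | bot : Sym D
  | dollar : Sym D
  | mvL : Sym D
  | mvR : Sym D
deriving DecidableEq

instance {D : Type} [Fintype D] [DecidableEq D] : Fintype (Sym D) where
  elems := ((Finset.univ : Finset (Option D)).image Sym.dat) ∪
    {Sym.bot, Sym.dollar, Sym.mvL, Sym.mvR}
  complete := by intro x; cases x <;> simp

/-- The queue alphabet `D□ ∪ {⊥, $}`. -/
noncomputable def qAlphList (D : Type) [Fintype D] [DecidableEq D] : List (Sym D) :=
  ((Finset.univ : Finset (Sym D)).filter fun v => v ≠ Sym.mvL ∧ v ≠ Sym.mvR).toList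

def dmap {D : Type} (l : List (Option D)) : List (Sym D) := l.map Sym.dat

def movSym {D : Type} : Move → Sym D
  | .L => .mvL
  | .R => .mvR

/-- Names of the finite tape-controller specification `ET`. -/
inductive TName (D : Type) : Type
  | H : Option D → TName D
  | HL : Option D → TName D
  | HR : Option D → TName D
  | Back : TName D
  | Fwd : Option D → TName D
  | FwdBot : TName D

/-- The finite tape-controller specification `ET`, with read channel `cr`,
write channel `cw`, move channel `cm`, and a queue interface on channels
`ci` (insert) and `co` (remove). -/
noncomputable def tapeCtrlSpec (C D B : Type) [Fintype D] (ci co cr cw cm : C) :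
    TName D → Option (PExp C (Sym D) B (TName D))
  | .H d => some <| .alt (.alt (.alt (.alt
      (.pref (some (.send cr (.dat d))) (.name (.H d)))
      (sumList (allOf (Option D)) fun e =>
        .pref (some (.recv cw (.dat e))) (.name (.H e))))
      (.pref (some (.recv cm .mvL)) (.name (.HL d))))
      (.pref (some (.recv cm .mvR)) (.name (.HR d))))
      .emp
  | .HL d => some <| .pref (some (.send ci (.dat d)))
      (.alt (sumList (allOf (Option D)) fun e =>
          .pref (some (.recv co (.dat e))) (.name (.H e)))
        (.pref (some (.recv co .bot))
          (.pref (some (.send ci .dollar))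
            (.pref (some (.send ci .bot)) (.name .Back)))))
  | .Back => some <| .alt
      (sumList (allOf (Option D)) fun d =>
        .pref (some (.recv co (.dat d)))
          (.pref (some (.send ci (.dat d))) (.name .Back)))
      (.pref (some (.recv co .dollar)) (.name (.H none)))
  | .HR d => some <| .pref (some (.send ci .dollar))
      (.pref (some (.send ci (.dat d)))
        (.alt (sumList (allOf (Option D)) fun e =>
            .pref (some (.recv co (.dat e))) (.name (.Fwd e)))
          (.pref (some (.recv co .bot)) (.name .FwdBot))))
  | .Fwd d => some <| .alt (.alt
      (sumList (allOf (Option D)) fun e =>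
        .pref (some (.recv co (.dat e)))
          (.pref (some (.send ci (.dat d))) (.name (.Fwd e))))
      (.pref (some (.recv co .bot))
        (.pref (some (.send ci (.dat d))) (.name .FwdBot))))
      (.pref (some (.recv co .dollar)) (.name (.H d)))
  | .FwdBot => some <| .alt
      (sumList (allOf (Option D)) fun e =>
        .pref (some (.recv co (.dat e)))
          (.pref (some (.send ci .bot)) (.name (.Fwd e))))
      (.pref (some (.recv co .dollar))
        (.pref (some (.send ci .bot)) (.name (.H none))))

/-- The infinite tape specification `E∞T`: one name for every tape instance,
with read channel `cr`, write channel `cw` and move channel `cm`. -/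
noncomputable def infTapeSpec (C B D : Type) [Fintype D] (cr cw cm : C) :
    Tape D → Option (PExp C (Sym D) B (Tape D)) := fun t =>
  some <| .alt (.alt (.alt (.alt
    (.pref (some (.send cr (.dat t.head))) (.name t))
    (sumList (allOf (Option D)) fun e =>
      .pref (some (.recv cw (.dat e))) (.name ⟨t.left, e, t.right⟩)))
    (.pref (some (.recv cm .mvL)) (.name (t.writeMove t.head .L))))
    (.pref (some (.recv cm .mvR)) (.name (t.writeMove t.head .R))))
    .emp

/-- The finite-control specification `Efc` of an RTM `M`:
`C_{s,d} ≝ Σ_{(s,d,a,e,Mv,t) ∈ →} a.w!e.m!Mv.Σ_{f∈D□} r?f.C_{t,f}`,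
with an additional summand `1` iff `s` is a final state of `M`. -/
noncomputable def fcSpec {C D B : Type} [Fintype D] [Fintype B]
    (M : RTM B D) (cr cw cm : C) :
    M.Q × Option D → Option (PExp C (Sym D) B (M.Q × Option D)) := fun sd =>
  let base : PExp C (Sym D) B (M.Q × Option D) :=
    bigAlt ((((Set.toFinite {x : Option B × Option D × Move × M.Q |
        M.trans sd.1 sd.2 x.1 x.2.1 x.2.2.1 x.2.2.2}).toFinset).toList).map fun x =>
      .pref (Option.map CAct.base x.1)
        (.pref (some (.send cw (.dat x.2.1)))
          (.pref (some (.send cm (movSym x.2.2.1)))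
            (sumList (allOf (Option D)) fun f =>
              .pref (some (.recv cr (.dat f))) (.name (x.2.2.2, f))))))
  haveI := Classical.propDecidable (sd.1 ∈ M.final)
  some (if sd.1 ∈ M.final then .alt base .emp else base)

end RTMPaper

namespace RTMPaper

/-- The tape-controller specification combined with the infinite queue
specification (over the queue alphabet `D□ ∪ {⊥, $}`). -/
noncomputable def EdTQ (C D B : Type) [Fintype D] [DecidableEq D]
    (ci co cr cw cm : C) :
    (TName D ⊕ List (Sym D)) →
      Option (PExp C (Sym D) B (TName D ⊕ List (Sym D))) :=
  combineSpec (tapeCtrlSpec C D B ci co cr cw cm)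
    (infQueueSpec C B (Sym D) (qAlphList D) ci co)

/-! ### Auxiliary lemmas for Statement 13 -/

section GenericStep

variable {C V B N : Type} {E : N → Option (PExp C V B N)}

theorem step_pref_iff {a : Option (CAct C V B)} {p : PExp C V B N}
    {b : Option (CAct C V B)} {q : PExp C V B N} :
    Step E (.pref a p) b q ↔ b = a ∧ q = p := by
  constructor
  · intro h; cases h; exact ⟨rfl, rfl⟩
  · rintro ⟨rfl, rfl⟩; exact Step.pref

theorem step_alt_iff {p q : PExp C V B N} {a : Option (CAct C V B)} {r : PExp C V B N} :
    Step E (.alt p q) a r ↔ Step E p a r ∨ Step E q a r := by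
  constructor
  · intro h
    cases h with
    | altL h => exact Or.inl h
    | altR h => exact Or.inr h
  · rintro (h | h)
    · exact Step.altL h
    · exact Step.altR h

theorem step_emp_iff {a : Option (CAct C V B)} {q : PExp C V B N} :
    Step E .emp a q ↔ False := by
  constructor
  · intro h; cases h
  · exact False.elim

theorem step_dl_iff {a : Option (CAct C V B)} {q : PExp C V B N} :
    Step E .dl a q ↔ False := by
  constructor
  · intro h; cases h
  · exact False.elim

theorem step_name_iff {n : N} {a : Option (CAct C V B)} {q : PExp C V B N} :
    Step E (.name n) a q ↔ ∃ p, E n = some p ∧ Step E p a q := by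
  constructor
  · intro h
    cases h with
    | name hE hs => exact ⟨_, hE, hs⟩
  · rintro ⟨p, hE, hs⟩; exact Step.name hE hs

theorem step_bigAlt_iff {L : List (PExp C V B N)} {a : Option (CAct C V B)}
    {q : PExp C V B N} :
    Step E (bigAlt L) a q ↔ ∃ p ∈ L, Step E p a q := by
  induction L with
  | nil => simp [bigAlt, step_dl_iff]
  | cons x L ih =>
    show Step E (.alt x (bigAlt L)) a q ↔ _
    rw [step_alt_iff, ih]
    simp

theorem step_sumList_iff {ι : Type} {l : List ι} {f : ι → PExp C V B N}
    {a : Option (CAct C V B)} {q : PExp C V B N} :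
    Step E (sumList l f) a q ↔ ∃ x ∈ l, Step E (f x) a q := by
  rw [sumList, step_bigAlt_iff]
  simp

theorem step_par_iff {C' : Set C} {p q : PExp C V B N} {a : Option (CAct C V B)}
    {r : PExp C V B N} :
    Step E (.par C' p q) a r ↔
      ((∃ p', Step E p a p' ∧ ¬ IsComm C' a ∧ r = .par C' p' q) ∨
       (∃ q', Step E q a q' ∧ ¬ IsComm C' a ∧ r = .par C' p q') ∨
       (∃ c ∈ C', ∃ v p' q', a = none ∧ r = .par C' p' q' ∧
         ((Step E p (some (.send c v)) p' ∧ Step E q (some (.recv c v)) q') ∨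
          (Step E p (some (.recv c v)) p' ∧ Step E q (some (.send c v)) q')))) := by
  constructor
  · intro h
    cases h with
    | parL h hc => exact Or.inl ⟨_, h, hc, rfl⟩
    | parR h hc => exact Or.inr (Or.inl ⟨_, h, hc, rfl⟩)
    | syncSR hc h1 h2 => exact Or.inr (Or.inr ⟨_, hc, _, _, _, rfl, rfl, Or.inl ⟨h1, h2⟩⟩)
    | syncRS hc h1 h2 => exact Or.inr (Or.inr ⟨_, hc, _, _, _, rfl, rfl, Or.inr ⟨h1, h2⟩⟩)
  · rintro (⟨p', h, hc, rfl⟩ | ⟨q', h, hc, rfl⟩ |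
      ⟨c, hc, v, p', q', rfl, rfl, (⟨h1, h2⟩ | ⟨h1, h2⟩)⟩)
    · exact Step.parL h hc
    · exact Step.parR h hc
    · exact Step.syncSR hc h1 h2
    · exact Step.syncRS hc h1 h2

theorem mapNames_bigAlt {N' : Type} (g : N → N') (L : List (PExp C V B N)) :
    (bigAlt L).mapNames g = bigAlt (L.map (PExp.mapNames g)) := by
  induction L with
  | nil => rfl
  | cons x L ih =>
    show PExp.alt (x.mapNames g) ((bigAlt L).mapNames g) = _
    rw [ih]; rfl

theorem mapNames_sumList {N' ι : Type} (g : N → N') (l : List ι) (f : ι → PExp C V B N) :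
    (sumList l f).mapNames g = sumList l (fun x => (f x).mapNames g) := by
  rw [sumList, mapNames_bigAlt, sumList, List.map_map]; rfl

end GenericStep

/-! ### Deterministic internal computations -/

/-- A unique τ-step: `s` has exactly one outgoing transition, a τ-step to `t`. -/
def UStep {S A : Type} (tr : S → Option A → S → Prop) (s t : S) : Prop :=
  tr s none t ∧ ∀ a u, tr s a u → a = none ∧ u = t

theorem DIC_refl {S A : Type} {tr : S → Option A → S → Prop} {s : S} :
    DetInternalComp tr s s :=
  ⟨0, fun _ => s, rfl, rfl, fun i h => absurd h (Nat.not_lt_zero i),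
    fun i h => absurd h (Nat.not_lt_zero i)⟩

theorem dic_of_eq {S A : Type} {tr : S → Option A → S → Prop} {s t : S}
    (h : s = t) : DetInternalComp tr s t := h ▸ DIC_refl

theorem dic_congr {S A : Type} {tr : S → Option A → S → Prop} {s s' t : S}
    (h : s = s') (hz : DetInternalComp tr s' t) : DetInternalComp tr s t := h ▸ hz

theorem UStep.head {S A : Type} {tr : S → Option A → S → Prop} {s t u : S}
    (h1 : UStep tr s t) (h2 : DetInternalComp tr t u) :
    DetInternalComp tr s u := by
  obtain ⟨n, f, hf0, hfn, hstep, hdet⟩ := h2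
  refine ⟨n + 1, fun i => Nat.casesOn i s f, rfl, hfn, ?_, ?_⟩
  · intro i hi
    cases i with
    | zero => show tr s none (f 0); rw [hf0]; exact h1.1
    | succ j => exact hstep j (by omega)
  · intro i hi a v hv
    cases i with
    | zero =>
      obtain ⟨ha, hv'⟩ := h1.2 a v hv
      refine ⟨ha, ?_⟩
      show v = f 0
      rw [hf0, hv']
    | succ j => exact hdet j (by omega) a v hv

section TapeAux

variable {C D B : Type} [Fintype D] [DecidableEq D] {ci co cr cw cm : C}

local notation "TQ" => PExp C (Sym D) B (TName D ⊕ List (Sym D))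
local notation "EE" => EdTQ C D B ci co cr cw cm

/-- Controller name as a process expression. -/
def nm (t : TName D) : TQ := .name (.inl t)

/-- Queue name as a process expression. -/
def qn (l : List (Sym D)) : TQ := .name (.inr l)

/-- A configuration: controller expression in parallel with a queue. -/
def cfg (c₁ c₂ : C) (p : TQ) (l : List (Sym D)) : TQ := .par {c₁, c₂} p (qn l)

def K3 (c₁ : C) : TQ := .pref (some (.send c₁ .bot)) (nm .Back)

def K2 (c₁ : C) : TQ := .pref (some (.send c₁ .dollar)) (K3 c₁)

noncomputable def K1 (c₁ c₂ : C) : TQ :=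
  .alt (sumList (allOf (Option D)) fun e => .pref (some (.recv c₂ (.dat e))) (nm (.H e)))
    (.pref (some (.recv c₂ .bot)) (K2 c₁))

def BK (c₁ : C) (e : Option D) : TQ := .pref (some (.send c₁ (.dat e))) (nm .Back)

noncomputable def K5 (c₂ : C) : TQ :=
  .alt (sumList (allOf (Option D)) fun e => .pref (some (.recv c₂ (.dat e))) (nm (.Fwd e)))
    (.pref (some (.recv c₂ .bot)) (nm .FwdBot))

noncomputable def K4 (c₁ c₂ : C) (d : Option D) : TQ :=
  .pref (some (.send c₁ (.dat d))) (K5 c₂)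

def FK (c₁ : C) (h : Option D) (t : TQ) : TQ := .pref (some (.send c₁ (.dat h))) t

def FB (c₁ : C) (t : TQ) : TQ := .pref (some (.send c₁ .bot)) t

theorem mem_allOf {ι : Type} [Fintype ι] (x : ι) : x ∈ allOf ι := by
  simp [allOf]

theorem dat_mem_qAlph (e : Option D) : Sym.dat e ∈ qAlphList D := by
  simp [qAlphList]

theorem bot_mem_qAlph : (Sym.bot : Sym D) ∈ qAlphList D := by
  simp [qAlphList]

theorem dollar_mem_qAlph : (Sym.dollar : Sym D) ∈ qAlphList D := by
  simp [qAlphList]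

theorem look_HL (d : Option D) :
    EdTQ C D B ci co cr cw cm (.inl (.HL d)) =
      some (.pref (some (.send ci (.dat d))) (K1 ci co)) := by
  simp [EdTQ, combineSpec, tapeCtrlSpec, PExp.mapNames, mapNames_sumList, K1, K2, K3, nm]

theorem look_Back :
    EdTQ C D B ci co cr cw cm (.inl .Back) =
      some (.alt
        (sumList (allOf (Option D)) fun e => .pref (some (.recv co (.dat e))) (BK ci e))
        (.pref (some (.recv co .dollar)) (nm (.H none)))) := by
  simp [EdTQ, combineSpec, tapeCtrlSpec, PExp.mapNames, mapNames_sumList, BK, nm]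

theorem look_HR (d : Option D) :
    EdTQ C D B ci co cr cw cm (.inl (.HR d)) =
      some (.pref (some (.send ci .dollar)) (K4 ci co d)) := by
  simp [EdTQ, combineSpec, tapeCtrlSpec, PExp.mapNames, mapNames_sumList, K4, K5, nm]

theorem look_Fwd (h : Option D) :
    EdTQ C D B ci co cr cw cm (.inl (.Fwd h)) =
      some (.alt (.alt
        (sumList (allOf (Option D)) fun e =>
          .pref (some (.recv co (.dat e))) (FK ci h (nm (.Fwd e))))
        (.pref (some (.recv co .bot)) (FK ci h (nm .FwdBot))))
        (.pref (some (.recv co .dollar)) (nm (.H h)))) := by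
  simp [EdTQ, combineSpec, tapeCtrlSpec, PExp.mapNames, mapNames_sumList, FK, nm]

theorem look_FwdBot :
    EdTQ C D B ci co cr cw cm (.inl .FwdBot) =
      some (.alt
        (sumList (allOf (Option D)) fun e =>
          .pref (some (.recv co (.dat e))) (FB ci (nm (.Fwd e))))
        (.pref (some (.recv co .dollar)) (FB ci (nm (.H none))))) := by
  simp [EdTQ, combineSpec, tapeCtrlSpec, PExp.mapNames, mapNames_sumList, FB, nm]

theorem queue_step_iff {l : List (Sym D)} {a : Option (CAct C (Sym D) B)} {q : TQ} :
    Step EE (qn l) a q ↔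
      ((∃ e ∈ qAlphList D, a = some (.recv ci e) ∧ q = qn (e :: l)) ∨
       (∃ x, l.getLast? = some x ∧ a = some (.send co x) ∧ q = qn l.dropLast)) := by
  rw [qn, step_name_iff]
  rcases hl : l.getLast? with _ | x
  · have hnil : l = [] := by simpa using hl
    subst hnil
    simp [EdTQ, combineSpec, infQueueSpec, PExp.mapNames, mapNames_sumList,
      step_alt_iff, step_emp_iff, step_sumList_iff, step_pref_iff, qn]
  · simp [EdTQ, combineSpec, infQueueSpec, hl, PExp.mapNames, mapNames_sumList,
      step_alt_iff, step_emp_iff, step_sumList_iff, step_pref_iff, qn]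
    exact or_comm

theorem queue_recv {v : Sym D} {l : List (Sym D)} (hv : v ∈ qAlphList D) :
    Step EE (qn l) (some (.recv ci v)) (qn (v :: l)) :=
  queue_step_iff.2 (Or.inl ⟨v, hv, rfl, rfl⟩)

theorem queue_send {l : List (Sym D)} {x : Sym D} (hl : l.getLast? = some x) :
    Step EE (qn l) (some (.send co x)) (qn l.dropLast) :=
  queue_step_iff.2 (Or.inr ⟨x, hl, rfl, rfl⟩)

theorem ustep_send {p p' : TQ} {v : Sym D} {l : List (Sym D)}
    (hv : v ∈ qAlphList D)
    (hiff : ∀ a q, Step EE p a q ↔ (a = some (.send ci v) ∧ q = p')) :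
    UStep (Step EE) (cfg ci co p l) (cfg ci co p' (v :: l)) := by
  constructor
  · show Step EE (.par {ci, co} p (qn l)) none (.par {ci, co} p' (qn (v :: l)))
    exact Step.syncSR (by simp) ((hiff _ _).2 ⟨rfl, rfl⟩) (queue_recv hv)
  · intro a u hu
    simp only [cfg] at hu
    rw [step_par_iff] at hu
    rcases hu with ⟨p₂, h, hc, rfl⟩ | ⟨q₂, h, hc, rfl⟩ |
      ⟨c, hcC, w, p₂, q₂, rfl, rfl, (⟨h1, h2⟩ | ⟨h1, h2⟩)⟩
    · obtain ⟨rfl, -⟩ := (hiff _ _).1 h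
      exact absurd (by simp [IsComm] : IsComm ({ci, co} : Set C)
        (some (CAct.send ci v (B := B)))) hc
    · rcases queue_step_iff.1 h with ⟨e, he, rfl, -⟩ | ⟨x, hx, rfl, -⟩
      · exact absurd (by simp [IsComm] : IsComm ({ci, co} : Set C)
          (some (CAct.recv ci e (B := B)))) hc
      · exact absurd (by simp [IsComm] : IsComm ({ci, co} : Set C)
          (some (CAct.send co x (B := B)))) hc
    · obtain ⟨heq, hp⟩ := (hiff _ _).1 h1
      obtain ⟨hc1, hw⟩ : c = ci ∧ w = v := by simpa using heq
      rw [hc1, hw] at h2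
      rcases queue_step_iff.1 h2 with ⟨e, he, heq2, hq⟩ | ⟨y, hy, heq2, -⟩
      · have hev : v = e := by simpa using heq2
        refine ⟨rfl, ?_⟩
        rw [hp, hq, ← hev]
        rfl
      · simp at heq2
    · obtain ⟨heq, -⟩ := (hiff _ _).1 h1
      simp at heq

theorem ustep_recv {p p' : TQ} {x : Sym D} {l' : List (Sym D)}
    (hex : Step EE p (some (.recv co x)) p')
    (huniq : ∀ q, Step EE p (some (.recv co x)) q → q = p')
    (hall : ∀ a q, Step EE p a q → ∃ w, a = some (.recv co w)) :
    UStep (Step EE) (cfg ci co p (l' ++ [x])) (cfg ci co p' l') := by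
  have hl : (l' ++ [x]).getLast? = some x := by simp
  have hd : (l' ++ [x]).dropLast = l' := by simp
  constructor
  · show Step EE (.par {ci, co} p (qn (l' ++ [x]))) none (.par {ci, co} p' (qn l'))
    have := Step.syncRS (C' := ({ci, co} : Set C)) (by simp) hex (queue_send hl)
    rwa [hd] at this
  · intro a u hu
    simp only [cfg] at hu
    rw [step_par_iff] at hu
    rcases hu with ⟨p₂, h, hc, rfl⟩ | ⟨q₂, h, hc, rfl⟩ |
      ⟨c, hcC, w, p₂, q₂, rfl, rfl, (⟨h1, h2⟩ | ⟨h1, h2⟩)⟩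
    · obtain ⟨w, rfl⟩ := hall _ _ h
      exact absurd (by simp [IsComm] : IsComm ({ci, co} : Set C)
        (some (CAct.recv co w (B := B)))) hc
    · rcases queue_step_iff.1 h with ⟨e, he, rfl, -⟩ | ⟨y, hy, rfl, -⟩
      · exact absurd (by simp [IsComm] : IsComm ({ci, co} : Set C)
          (some (CAct.recv ci e (B := B)))) hc
      · exact absurd (by simp [IsComm] : IsComm ({ci, co} : Set C)
          (some (CAct.send co y (B := B)))) hc
    · obtain ⟨w', heq⟩ := hall _ _ h1
      simp at heq
    · rcases queue_step_iff.1 h2 with ⟨e, he, heq2, -⟩ | ⟨y, hy, heq2, rfl⟩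
      · simp at heq2
      · obtain ⟨hc1, hw⟩ : c = co ∧ w = y := by simpa using heq2
        have hyx : y = x := by rw [hl] at hy; exact (Option.some_inj.1 hy).symm
        rw [hc1, hw, hyx] at h1
        refine ⟨rfl, ?_⟩
        rw [huniq _ h1, hd]
        rfl

/-! ### The individual controller-state characterisations -/

theorem stepHL_iff {d : Option D} {a : Option (CAct C (Sym D) B)} {q : TQ} :
    Step EE (nm (.HL d)) a q ↔ (a = some (.send ci (.dat d)) ∧ q = K1 ci co) := by
  rw [nm, step_name_iff]
  simp [look_HL, step_pref_iff]

theorem stepK1_iff {a : Option (CAct C (Sym D) B)} {q : TQ} :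
    Step EE (K1 ci co) a q ↔
      ((∃ e, a = some (.recv co (.dat e)) ∧ q = nm (.H e)) ∨
       (a = some (.recv co .bot) ∧ q = K2 ci)) := by
  simp [K1, step_alt_iff, step_sumList_iff, step_pref_iff, mem_allOf]

theorem stepBack_iff {a : Option (CAct C (Sym D) B)} {q : TQ} :
    Step EE (nm .Back) a q ↔
      ((∃ e, a = some (.recv co (.dat e)) ∧ q = BK ci e) ∨
       (a = some (.recv co .dollar) ∧ q = nm (.H none))) := by
  rw [nm, step_name_iff]
  simp [look_Back, step_alt_iff, step_sumList_iff, step_pref_iff, mem_allOf, nm]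

theorem stepHR_iff {d : Option D} {a : Option (CAct C (Sym D) B)} {q : TQ} :
    Step EE (nm (.HR d)) a q ↔ (a = some (.send ci .dollar) ∧ q = K4 ci co d) := by
  rw [nm, step_name_iff]
  simp [look_HR, step_pref_iff]

theorem stepK5_iff {a : Option (CAct C (Sym D) B)} {q : TQ} :
    Step EE (K5 co) a q ↔
      ((∃ e, a = some (.recv co (.dat e)) ∧ q = nm (.Fwd e)) ∨
       (a = some (.recv co .bot) ∧ q = nm .FwdBot)) := by
  simp [K5, step_alt_iff, step_sumList_iff, step_pref_iff, mem_allOf]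

theorem stepFwd_iff {h : Option D} {a : Option (CAct C (Sym D) B)} {q : TQ} :
    Step EE (nm (.Fwd h)) a q ↔
      ((∃ e, a = some (.recv co (.dat e)) ∧ q = FK ci h (nm (.Fwd e))) ∨
       (a = some (.recv co .bot) ∧ q = FK ci h (nm .FwdBot)) ∨
       (a = some (.recv co .dollar) ∧ q = nm (.H h))) := by
  rw [nm, step_name_iff]
  simp [look_Fwd, step_alt_iff, step_sumList_iff, step_pref_iff, mem_allOf, nm, or_assoc]

theorem stepFwdBot_iff {a : Option (CAct C (Sym D) B)} {q : TQ} :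
    Step EE (nm .FwdBot) a q ↔
      ((∃ e, a = some (.recv co (.dat e)) ∧ q = FB ci (nm (.Fwd e))) ∨
       (a = some (.recv co .dollar) ∧ q = FB ci (nm (.H none)))) := by
  rw [nm, step_name_iff]
  simp [look_FwdBot, step_alt_iff, step_sumList_iff, step_pref_iff, mem_allOf, nm]

/-! ### The individual deterministic moves -/

theorem M1 {d : Option D} {l : List (Sym D)} :
    UStep (Step EE) (cfg ci co (nm (.HL d)) l) (cfg ci co (K1 ci co) (Sym.dat d :: l)) :=
  ustep_send (dat_mem_qAlph d) (fun _ _ => stepHL_iff)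

theorem M2 {e : Option D} {l' : List (Sym D)} :
    UStep (Step EE) (cfg ci co (K1 ci co) (l' ++ [Sym.dat e])) (cfg ci co (nm (.H e)) l') := by
  apply ustep_recv
  · exact stepK1_iff.2 (Or.inl ⟨e, rfl, rfl⟩)
  · intro q h; rw [stepK1_iff] at h; simpa using h
  · intro a q h; rw [stepK1_iff] at h
    rcases h with ⟨e', he, -⟩ | ⟨he, -⟩
    · exact ⟨_, he⟩
    · exact ⟨_, he⟩

theorem M3 {l' : List (Sym D)} :
    UStep (Step EE) (cfg ci co (K1 ci co) (l' ++ [Sym.bot])) (cfg ci co (K2 ci) l') := by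
  apply ustep_recv
  · exact stepK1_iff.2 (Or.inr ⟨rfl, rfl⟩)
  · intro q h; rw [stepK1_iff] at h; simpa using h
  · intro a q h; rw [stepK1_iff] at h
    rcases h with ⟨e', he, -⟩ | ⟨he, -⟩
    · exact ⟨_, he⟩
    · exact ⟨_, he⟩

theorem M4 {l : List (Sym D)} :
    UStep (Step EE) (cfg ci co (K2 ci) l) (cfg ci co (K3 ci) (Sym.dollar :: l)) :=
  ustep_send dollar_mem_qAlph (fun _ _ => by simp [K2, step_pref_iff])

theorem M5 {l : List (Sym D)} :
    UStep (Step EE) (cfg ci co (K3 ci) l) (cfg ci co (nm .Back) (Sym.bot :: l)) :=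
  ustep_send bot_mem_qAlph (fun _ _ => by simp [K3, step_pref_iff])

theorem M6 {e : Option D} {l' : List (Sym D)} :
    UStep (Step EE) (cfg ci co (nm .Back) (l' ++ [Sym.dat e])) (cfg ci co (BK ci e) l') := by
  apply ustep_recv
  · exact stepBack_iff.2 (Or.inl ⟨e, rfl, rfl⟩)
  · intro q h; rw [stepBack_iff] at h; simpa using h
  · intro a q h; rw [stepBack_iff] at h
    rcases h with ⟨e', he, -⟩ | ⟨he, -⟩
    · exact ⟨_, he⟩
    · exact ⟨_, he⟩

theorem M7 {l' : List (Sym D)} :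
    UStep (Step EE) (cfg ci co (nm .Back) (l' ++ [Sym.dollar]))
      (cfg ci co (nm (.H (none : Option D))) l') := by
  apply ustep_recv
  · exact stepBack_iff.2 (Or.inr ⟨rfl, rfl⟩)
  · intro q h; rw [stepBack_iff] at h; simpa using h
  · intro a q h; rw [stepBack_iff] at h
    rcases h with ⟨e', he, -⟩ | ⟨he, -⟩
    · exact ⟨_, he⟩
    · exact ⟨_, he⟩

theorem M8 {e : Option D} {l : List (Sym D)} :
    UStep (Step EE) (cfg ci co (BK ci e) l) (cfg ci co (nm .Back) (Sym.dat e :: l)) :=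
  ustep_send (dat_mem_qAlph e) (fun _ _ => by simp [BK, step_pref_iff])

theorem M9 {d : Option D} {l : List (Sym D)} :
    UStep (Step EE) (cfg ci co (nm (.HR d)) l) (cfg ci co (K4 ci co d) (Sym.dollar :: l)) :=
  ustep_send dollar_mem_qAlph (fun _ _ => stepHR_iff)

theorem M10 {d : Option D} {l : List (Sym D)} :
    UStep (Step EE) (cfg ci co (K4 ci co d) l) (cfg ci co (K5 co) (Sym.dat d :: l)) :=
  ustep_send (dat_mem_qAlph d) (fun _ _ => by simp [K4, step_pref_iff])

theorem M11 {e : Option D} {l' : List (Sym D)} :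
    UStep (Step EE) (cfg ci co (K5 co) (l' ++ [Sym.dat e])) (cfg ci co (nm (.Fwd e)) l') := by
  apply ustep_recv
  · exact stepK5_iff.2 (Or.inl ⟨e, rfl, rfl⟩)
  · intro q h; rw [stepK5_iff] at h; simpa using h
  · intro a q h; rw [stepK5_iff] at h
    rcases h with ⟨e', he, -⟩ | ⟨he, -⟩
    · exact ⟨_, he⟩
    · exact ⟨_, he⟩

theorem M12 {l' : List (Sym D)} :
    UStep (Step EE) (cfg ci co (K5 co) (l' ++ [Sym.bot])) (cfg ci co (nm .FwdBot) l') := by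
  apply ustep_recv
  · exact stepK5_iff.2 (Or.inr ⟨rfl, rfl⟩)
  · intro q h; rw [stepK5_iff] at h; simpa using h
  · intro a q h; rw [stepK5_iff] at h
    rcases h with ⟨e', he, -⟩ | ⟨he, -⟩
    · exact ⟨_, he⟩
    · exact ⟨_, he⟩

theorem M13 {h : Option D} {e : Option D} {l' : List (Sym D)} :
    UStep (Step EE) (cfg ci co (nm (.Fwd h)) (l' ++ [Sym.dat e]))
      (cfg ci co (FK ci h (nm (.Fwd e))) l') := by
  apply ustep_recv
  · exact stepFwd_iff.2 (Or.inl ⟨e, rfl, rfl⟩)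
  · intro q hq; rw [stepFwd_iff] at hq; simpa using hq
  · intro a q hq; rw [stepFwd_iff] at hq
    rcases hq with ⟨e', he, -⟩ | ⟨he, -⟩ | ⟨he, -⟩
    · exact ⟨_, he⟩
    · exact ⟨_, he⟩
    · exact ⟨_, he⟩

theorem M14 {h : Option D} {l' : List (Sym D)} :
    UStep (Step EE) (cfg ci co (nm (.Fwd h)) (l' ++ [Sym.bot]))
      (cfg ci co (FK ci h (nm .FwdBot)) l') := by
  apply ustep_recv
  · exact stepFwd_iff.2 (Or.inr (Or.inl ⟨rfl, rfl⟩))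
  · intro q hq; rw [stepFwd_iff] at hq; simpa using hq
  · intro a q hq; rw [stepFwd_iff] at hq
    rcases hq with ⟨e', he, -⟩ | ⟨he, -⟩ | ⟨he, -⟩
    · exact ⟨_, he⟩
    · exact ⟨_, he⟩
    · exact ⟨_, he⟩

theorem M15 {h : Option D} {l' : List (Sym D)} :
    UStep (Step EE) (cfg ci co (nm (.Fwd h)) (l' ++ [Sym.dollar]))
      (cfg ci co (nm (.H h)) l') := by
  apply ustep_recv
  · exact stepFwd_iff.2 (Or.inr (Or.inr ⟨rfl, rfl⟩))
  · intro q hq; rw [stepFwd_iff] at hq; simpa using hq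
  · intro a q hq; rw [stepFwd_iff] at hq
    rcases hq with ⟨e', he, -⟩ | ⟨he, -⟩ | ⟨he, -⟩
    · exact ⟨_, he⟩
    · exact ⟨_, he⟩
    · exact ⟨_, he⟩

theorem M16 {h : Option D} {t : TQ} {l : List (Sym D)} :
    UStep (Step EE) (cfg ci co (FK ci h t) l) (cfg ci co t (Sym.dat h :: l)) :=
  ustep_send (dat_mem_qAlph h) (fun _ _ => by simp [FK, step_pref_iff])

theorem M17 {e : Option D} {l' : List (Sym D)} :
    UStep (Step EE) (cfg ci co (nm .FwdBot) (l' ++ [Sym.dat e]))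
      (cfg ci co (FB ci (nm (.Fwd e))) l') := by
  apply ustep_recv
  · exact stepFwdBot_iff.2 (Or.inl ⟨e, rfl, rfl⟩)
  · intro q hq; rw [stepFwdBot_iff] at hq; simpa using hq
  · intro a q hq; rw [stepFwdBot_iff] at hq
    rcases hq with ⟨e', he, -⟩ | ⟨he, -⟩
    · exact ⟨_, he⟩
    · exact ⟨_, he⟩

theorem M18 {l' : List (Sym D)} :
    UStep (Step EE) (cfg ci co (nm .FwdBot) (l' ++ [Sym.dollar]))
      (cfg ci co (FB ci (nm (.H none))) l') := by
  apply ustep_recv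
  · exact stepFwdBot_iff.2 (Or.inr ⟨rfl, rfl⟩)
  · intro q hq; rw [stepFwdBot_iff] at hq; simpa using hq
  · intro a q hq; rw [stepFwdBot_iff] at hq
    rcases hq with ⟨e', he, -⟩ | ⟨he, -⟩
    · exact ⟨_, he⟩
    · exact ⟨_, he⟩

theorem M19 {t : TQ} {l : List (Sym D)} :
    UStep (Step EE) (cfg ci co (FB ci t) l) (cfg ci co t (Sym.bot :: l)) :=
  ustep_send bot_mem_qAlph (fun _ _ => by simp [FB, step_pref_iff])

/-! ### The copying loops -/

theorem back_loop (v : List (Option D)) (u : List (Sym D)) {z : TQ}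
    (hz : DetInternalComp (Step EE)
      (cfg ci co (nm (.H (none : Option D))) ((dmap v ++ u) ++ [Sym.bot])) z) :
    DetInternalComp (Step EE)
      (cfg ci co (nm .Back) (u ++ (Sym.bot :: (Sym.dollar :: dmap v)))) z := by
  induction v using List.reverseRecOn generalizing u with
  | nil =>
    refine dic_congr (s' := cfg ci co (nm .Back) ((u ++ [Sym.bot]) ++ [Sym.dollar]))
      (by simp [cfg, qn, dmap]) ?_
    exact M7.head (dic_congr (by simp [cfg, qn, dmap]) hz)
  | append_singleton v x ih =>
    refine dic_congr
      (s' := cfg ci co (nm .Back)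
        ((u ++ (Sym.bot :: (Sym.dollar :: dmap v))) ++ [Sym.dat x]))
      (by simp [cfg, qn, dmap]) ?_
    exact M6.head (M8.head (ih (Sym.dat x :: u) (dic_congr (by simp [cfg, qn, dmap]) hz)))

theorem fwd_dats (v' : List (Option D)) (x : Option D) (u w : List (Sym D)) (h : Option D)
    {z : TQ}
    (hz : DetInternalComp (Step EE)
      (cfg ci co (nm (.Fwd x)) ((dmap v' ++ (Sym.dat h :: u)) ++ (Sym.dollar :: w))) z) :
    DetInternalComp (Step EE)
      (cfg ci co (nm (.Fwd h)) ((u ++ (Sym.dollar :: w)) ++ dmap (x :: v'))) z := by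
  induction v' using List.reverseRecOn generalizing h u with
  | nil =>
    refine dic_congr
      (s' := cfg ci co (nm (.Fwd h)) ((u ++ (Sym.dollar :: w)) ++ [Sym.dat x]))
      (by simp [cfg, qn, dmap]) ?_
    exact M13.head (M16.head (dic_congr (by simp [cfg, qn, dmap]) hz))
  | append_singleton v'' y ih =>
    refine dic_congr
      (s' := cfg ci co (nm (.Fwd h))
        (((u ++ (Sym.dollar :: w)) ++ dmap (x :: v'')) ++ [Sym.dat y]))
      (by simp [cfg, qn, dmap]) ?_
    exact M13.head (M16.head (ih (Sym.dat h :: u) y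
      (dic_congr (by simp [cfg, qn, dmap]) hz)))

theorem fwdbot_dats (v' : List (Option D)) (x : Option D) (u w : List (Sym D)) {z : TQ}
    (hz : DetInternalComp (Step EE)
      (cfg ci co (nm (.Fwd x)) ((dmap v' ++ (Sym.bot :: u)) ++ (Sym.dollar :: w))) z) :
    DetInternalComp (Step EE)
      (cfg ci co (nm .FwdBot) ((u ++ (Sym.dollar :: w)) ++ dmap (x :: v'))) z := by
  rcases List.eq_nil_or_concat v' with rfl | ⟨v'', y, rfl⟩
  · refine dic_congr
      (s' := cfg ci co (nm .FwdBot) ((u ++ (Sym.dollar :: w)) ++ [Sym.dat x]))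
      (by simp [cfg, qn, dmap]) ?_
    exact M17.head (M19.head (dic_congr (by simp [cfg, qn, dmap]) hz))
  · refine dic_congr
      (s' := cfg ci co (nm .FwdBot)
        (((u ++ (Sym.dollar :: w)) ++ dmap (x :: v'')) ++ [Sym.dat y]))
      (by simp [cfg, qn, dmap]) ?_
    exact M17.head (M19.head
      (fwd_dats v'' x (Sym.bot :: u) w y (dic_congr (by simp [cfg, qn, dmap]) hz)))

theorem fwd_dollar {h : Option D} {u : List (Sym D)} {z : TQ}
    (hz : DetInternalComp (Step EE) (cfg ci co (nm (.H h)) u) z) :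
    DetInternalComp (Step EE) (cfg ci co (nm (.Fwd h)) (u ++ [Sym.dollar])) z :=
  M15.head hz

theorem fwd_to_bot {h : Option D} {u w : List (Sym D)} {z : TQ}
    (hz : DetInternalComp (Step EE)
      (cfg ci co (nm .FwdBot) ((Sym.dat h :: u) ++ (Sym.dollar :: w))) z) :
    DetInternalComp (Step EE)
      (cfg ci co (nm (.Fwd h)) ((u ++ (Sym.dollar :: w)) ++ [Sym.bot])) z :=
  M14.head (M16.head hz)

theorem fwdbot_dollar {u : List (Sym D)} {z : TQ}
    (hz : DetInternalComp (Step EE)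
      (cfg ci co (nm (.H (none : Option D))) (Sym.bot :: u)) z) :
    DetInternalComp (Step EE) (cfg ci co (nm .FwdBot) (u ++ [Sym.dollar])) z :=
  M18.head (M19.head hz)

end TapeAux

/-- The head-movement phases of the tape controller give rise
to deterministic internal computations in the LTS of the specification
`ET ∪ E∞Q`. -/
theorem tape_controller_head_moves
    {C D B : Type} [Fintype D] [DecidableEq D] (ci co cr cw cm : C)
    (hdist : List.Pairwise (· ≠ ·) [ci, co, cr, cw, cm])
    (d : Option D) (δL δR : List (Option D)) :
    (∀ (ζL : List (Option D)) (dL : Option D), δL = ζL ++ [dL] →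
      DetInternalComp (Step (EdTQ C D B ci co cr cw cm))
        (.par {ci, co} (.name (.inl (.HL d)))
          (.name (.inr (dmap δR ++ [Sym.bot] ++ dmap δL))))
        (.par {ci, co} (.name (.inl (.H dL)))
          (.name (.inr (Sym.dat d :: (dmap δR ++ [Sym.bot] ++ dmap ζL)))))) ∧
    (δL = [] →
      DetInternalComp (Step (EdTQ C D B ci co cr cw cm))
        (.par {ci, co} (.name (.inl (.HL d)))
          (.name (.inr (dmap δR ++ [Sym.bot] ++ dmap δL))))
        (.par {ci, co} (.name (.inl (.H (none : Option D))))
          (.name (.inr (Sym.dat d :: (dmap δR ++ [Sym.bot])))))) ∧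
    (∀ (dR : Option D) (ζR : List (Option D)), δR = dR :: ζR →
      DetInternalComp (Step (EdTQ C D B ci co cr cw cm))
        (.par {ci, co} (.name (.inl (.HR d)))
          (.name (.inr (dmap δR ++ [Sym.bot] ++ dmap δL))))
        (.par {ci, co} (.name (.inl (.H dR)))
          (.name (.inr (dmap ζR ++ [Sym.bot] ++ dmap δL ++ [Sym.dat d]))))) ∧
    (δR = [] →
      DetInternalComp (Step (EdTQ C D B ci co cr cw cm))
        (.par {ci, co} (.name (.inl (.HR d)))
          (.name (.inr (dmap δR ++ [Sym.bot] ++ dmap δL))))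
        (.par {ci, co} (.name (.inl (.H (none : Option D))))
          (.name (.inr ([Sym.bot] ++ dmap δL ++ [Sym.dat d]))))) := by
  refine ⟨?_, ?_, ?_, ?_⟩
  · -- left move, non-empty left part
    rintro ζ dL rfl
    refine dic_congr
      (s' := cfg ci co (nm (.HL d)) ((dmap δR ++ [Sym.bot] ++ dmap ζ) ++ [Sym.dat dL]))
      (by simp [cfg, qn, nm, dmap]) ?_
    refine M1.head ?_
    refine dic_congr
      (s' := cfg ci co (K1 ci co)
        ((Sym.dat d :: (dmap δR ++ [Sym.bot] ++ dmap ζ)) ++ [Sym.dat dL]))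
      (by simp [cfg, qn, dmap]) ?_
    refine M2.head ?_
    exact dic_of_eq (by simp [cfg, qn, nm, dmap])
  · -- left move, empty left part
    rintro rfl
    refine dic_congr
      (s' := cfg ci co (nm (.HL d)) (dmap δR ++ [Sym.bot]))
      (by simp [cfg, qn, nm, dmap]) ?_
    refine M1.head ?_
    refine dic_congr
      (s' := cfg ci co (K1 ci co) ((Sym.dat d :: dmap δR) ++ [Sym.bot]))
      (by simp [cfg, qn, dmap]) ?_
    refine M3.head (M4.head (M5.head ?_))
    refine dic_congr
      (s' := cfg ci co (nm .Back)
        (([] : List (Sym D)) ++ (Sym.bot :: (Sym.dollar :: dmap (d :: δR)))))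
      (by simp [cfg, qn, dmap]) ?_
    refine back_loop (d :: δR) [] ?_
    exact dic_of_eq (by simp [cfg, qn, nm, dmap])
  · -- right move, non-empty right part
    rintro dR ζR rfl
    refine M9.head (M10.head ?_)
    rcases List.eq_nil_or_concat δL with rfl | ⟨ζ, x, rfl⟩
    · -- δL = []
      refine dic_congr
        (s' := cfg ci co (K5 co)
          (([Sym.dat d] ++ (Sym.dollar :: dmap (dR :: ζR))) ++ [Sym.bot]))
        (by simp [cfg, qn, dmap]) ?_
      refine M12.head ?_
      refine fwdbot_dats ζR dR [Sym.dat d] [] ?_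
      refine dic_congr
        (s' := cfg ci co (nm (.Fwd dR))
          ((dmap ζR ++ [Sym.bot] ++ dmap ([] : List (Option D)) ++ [Sym.dat d]) ++
            [Sym.dollar]))
        (by simp [cfg, qn, dmap]) ?_
      refine fwd_dollar ?_
      exact dic_of_eq (by simp [cfg, qn, nm, dmap])
    · -- δL = ζ ++ [x]
      refine dic_congr
        (s' := cfg ci co (K5 co)
          ((Sym.dat d :: (Sym.dollar :: (dmap (dR :: ζR) ++ [Sym.bot] ++ dmap ζ))) ++
            [Sym.dat x]))
        (by simp [cfg, qn, dmap]) ?_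
      refine M11.head ?_
      rcases ζ with _ | ⟨y, ζ'⟩
      · -- ζ = []
        refine dic_congr
          (s' := cfg ci co (nm (.Fwd x))
            (([Sym.dat d] ++ (Sym.dollar :: dmap (dR :: ζR))) ++ [Sym.bot]))
          (by simp [cfg, qn, dmap]) ?_
        refine fwd_to_bot ?_
        refine fwdbot_dats ζR dR (Sym.dat x :: [Sym.dat d]) [] ?_
        refine dic_congr
          (s' := cfg ci co (nm (.Fwd dR))
            ((dmap ζR ++ [Sym.bot] ++ dmap (([] : List (Option D)).concat x) ++
              [Sym.dat d]) ++ [Sym.dollar]))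
          (by simp [cfg, qn, dmap]) ?_
        refine fwd_dollar ?_
        exact dic_of_eq (by simp [cfg, qn, nm, dmap])
      · -- ζ = y :: ζ'
        refine dic_congr
          (s' := cfg ci co (nm (.Fwd x))
            (([Sym.dat d] ++ (Sym.dollar :: (dmap (dR :: ζR) ++ [Sym.bot]))) ++
              dmap (y :: ζ')))
          (by simp [cfg, qn, dmap]) ?_
        refine fwd_dats ζ' y [Sym.dat d] (dmap (dR :: ζR) ++ [Sym.bot]) x ?_
        refine dic_congr
          (s' := cfg ci co (nm (.Fwd y))
            (((dmap ζ' ++ [Sym.dat x, Sym.dat d]) ++ (Sym.dollar :: dmap (dR :: ζR))) ++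
              [Sym.bot]))
          (by simp [cfg, qn, dmap]) ?_
        refine fwd_to_bot ?_
        refine dic_congr
          (s' := cfg ci co (nm .FwdBot)
            (((Sym.dat y :: (dmap ζ' ++ [Sym.dat x, Sym.dat d])) ++
              (Sym.dollar :: ([] : List (Sym D)))) ++ dmap (dR :: ζR)))
          (by simp [cfg, qn, dmap]) ?_
        refine fwdbot_dats ζR dR (Sym.dat y :: (dmap ζ' ++ [Sym.dat x, Sym.dat d])) [] ?_
        refine dic_congr
          (s' := cfg ci co (nm (.Fwd dR))
            ((dmap ζR ++ [Sym.bot] ++ dmap ((y :: ζ').concat x) ++ [Sym.dat d]) ++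
              [Sym.dollar]))
          (by simp [cfg, qn, dmap]) ?_
        refine fwd_dollar ?_
        exact dic_of_eq (by simp [cfg, qn, nm, dmap])
  · -- right move, empty right part
    rintro rfl
    refine dic_congr
      (s' := cfg ci co (nm (.HR d)) (Sym.bot :: dmap δL))
      (by simp [cfg, qn, nm, dmap]) ?_
    refine M9.head (M10.head ?_)
    rcases List.eq_nil_or_concat δL with rfl | ⟨ζ, x, rfl⟩
    · -- δL = []
      refine dic_congr
        (s' := cfg ci co (K5 co) ([Sym.dat d, Sym.dollar] ++ [Sym.bot]))
        (by simp [cfg, qn, dmap]) ?_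
      refine M12.head ?_
      refine fwdbot_dollar (u := [Sym.dat d]) ?_
      exact dic_of_eq (by simp [cfg, qn, nm, dmap])
    · -- δL = ζ ++ [x]
      refine dic_congr
        (s' := cfg ci co (K5 co)
          ((Sym.dat d :: (Sym.dollar :: (Sym.bot :: dmap ζ))) ++ [Sym.dat x]))
        (by simp [cfg, qn, dmap]) ?_
      refine M11.head ?_
      rcases ζ with _ | ⟨y, ζ'⟩
      · -- ζ = []
        refine dic_congr
          (s' := cfg ci co (nm (.Fwd x))
            (([Sym.dat d] ++ (Sym.dollar :: ([] : List (Sym D)))) ++ [Sym.bot]))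
          (by simp [cfg, qn, dmap]) ?_
        refine fwd_to_bot ?_
        refine fwdbot_dollar (u := [Sym.dat x, Sym.dat d]) ?_
        exact dic_of_eq (by simp [cfg, qn, nm, dmap])
      · -- ζ = y :: ζ'
        refine dic_congr
          (s' := cfg ci co (nm (.Fwd x))
            (([Sym.dat d] ++ (Sym.dollar :: [Sym.bot])) ++ dmap (y :: ζ')))
          (by simp [cfg, qn, dmap]) ?_
        refine fwd_dats ζ' y [Sym.dat d] [Sym.bot] x ?_
        refine dic_congr
          (s' := cfg ci co (nm (.Fwd y))
            (((dmap ζ' ++ [Sym.dat x, Sym.dat d]) ++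
              (Sym.dollar :: ([] : List (Sym D)))) ++ [Sym.bot]))
          (by simp [cfg, qn, dmap]) ?_
        refine fwd_to_bot ?_
        refine dic_congr
          (s' := cfg ci co (nm .FwdBot)
            ((Sym.dat y :: (dmap ζ' ++ [Sym.dat x, Sym.dat d])) ++ [Sym.dollar]))
          (by simp [cfg, qn, dmap]) ?_
        refine fwdbot_dollar ?_
        exact dic_of_eq (by simp [cfg, qn, nm, dmap])

end RTMPaper
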